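/- For c in (0,1) and x > 0, the integral of c*t*y^{c-1}/(t+y)^{c+1} over y from x-t to infinity plus (x-t)/x^c equals x^{1-c}, for every 0 < t <= x. -/

import Mathlib

open MeasureTheory Real Set

theorem stmt_1 (c x t : ℝ) (hc0 : 0 < c) (hc1 : c < 1) (hx : 0 < x)
    (ht0 : 0 < t) (htx : t ≤ x) :
    (∫ y in Set.Ioi (x - t), y ^ (1 - c) * (c * t * y ^ (c - 1) / (t + y) ^ (c + 1)))
      + (x - t) / x ^ c = x ^ (1 - c) := by
  have hxt : 0 ≤ x - t := by linarith
  have h1 : (∫ y in Set.Ioi (x - t), y ^ (1 - c) * (c * t * y ^ (c - 1) / (t + y) ^ (c + 1)))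
      = ∫ y in Set.Ioi (x - t), c * t * (y + t) ^ (-(c + 1)) := by
    apply setIntegral_congr_fun (measurableSet_Ioi)
    intro y hy
    have hy0 : 0 < y := lt_of_le_of_lt hxt hy
    have hty : 0 < t + y := by linarith
    have hpow : y ^ (1 - c) * y ^ (c - 1) = 1 := by
      rw [← rpow_add hy0]; norm_num
    calc y ^ (1 - c) * (c * t * y ^ (c - 1) / (t + y) ^ (c + 1))
        = (y ^ (1 - c) * y ^ (c - 1)) * (c * t) * ((t + y) ^ (c + 1))⁻¹ := by ring
      _ = c * t * (y + t) ^ (-(c + 1)) := by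
          rw [hpow, add_comm y t, rpow_neg hty.le]; ring
  have h2 : (∫ y in Set.Ioi (x - t), (y + t) ^ (-(c + 1)))
      = ∫ y in Set.Ioi x, y ^ (-(c + 1)) := by
    have := (measurePreserving_add_right (volume : Measure ℝ) t).setIntegral_preimage_emb
      (measurableEmbedding_addRight t) (fun y => y ^ (-(c + 1))) (Set.Ioi x)
    have hpre : (· + t) ⁻¹' Set.Ioi x = Set.Ioi (x - t) := by
      ext y; simp [Set.mem_Ioi, sub_lt_iff_lt_add]
    rwa [hpre] at this
  rw [h1, MeasureTheory.integral_const_mul, h2,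
    integral_Ioi_rpow_of_lt (by linarith) hx]
  have hxc : (0:ℝ) < x ^ c := rpow_pos_of_pos hx c
  have hxx : x ^ (-(c+1)+1) = (x ^ c)⁻¹ := by
    rw [show -(c+1)+1 = -c by ring, rpow_neg hx.le]
  have hxs : x ^ (1 - c) = x * (x ^ c)⁻¹ := by
    rw [show (1:ℝ) - c = 1 + -c by ring, rpow_add hx, rpow_one, rpow_neg hx.le]
  rw [hxx, hxs]
  field_simp
  ring_nf
  rw [mul_comm c t, mul_assoc, mul_inv_cancel₀ hc0.ne']
  ring
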